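/- One has r₀ = (4/π) ln 2 > 0, and for every integer p ≥ 1, r_p < r_{p+1} < 0. -/

import Mathlib

/-- `r_p`, with the convention `m² ln|m| = 0` when `m = 0` (automatic since `Real.log 0 = 0`). -/
noncomputable def rFn (p : ℕ) : ℝ :=
  (1 / (2 * Real.pi)) *
    (((p : ℝ) - 2) ^ 2 * Real.log |(p : ℝ) - 2| - 4 * ((p : ℝ) - 1) ^ 2 * Real.log |(p : ℝ) - 1|
      + 6 * (p : ℝ) ^ 2 * Real.log (p : ℝ) - 4 * ((p : ℝ) + 1) ^ 2 * Real.log ((p : ℝ) + 1)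
      + ((p : ℝ) + 2) ^ 2 * Real.log ((p : ℝ) + 2))

open Real Set

noncomputable def gg (x : ℝ) : ℝ := x ^ 2 * Real.log x

lemma gg_cont : Continuous gg := by
  have : Continuous fun x : ℝ => x * (x * Real.log x) :=
    continuous_id.mul Real.continuous_mul_log
  have e : gg = fun x : ℝ => x * (x * Real.log x) := by
    funext x; simp [gg, sq, mul_assoc]
  rw [e]; exact this

lemma gg_deriv {y : ℝ} (hy : y ≠ 0) :
    HasDerivAt gg (2 * y * Real.log y + y) y := by
  have h := (hasDerivAt_pow 2 y).mul (Real.hasDerivAt_log hy)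
  have : HasDerivAt gg ((2 : ℕ) * y ^ 1 * Real.log y + y ^ 2 * y⁻¹) y := h
  convert this using 1
  field_simp
  ring

lemma gg1_deriv {y : ℝ} (hy : 0 < y) :
    HasDerivAt (fun x => 2 * x * Real.log x + x) (2 * Real.log y + 3) y := by
  have h1 : HasDerivAt (fun x : ℝ => x * Real.log x) (Real.log y + 1) y := by
    have := (hasDerivAt_id y).mul (Real.hasDerivAt_log hy.ne')
    exact this.congr_deriv (by simp [hy.ne'])
  have h2 := ((h1.const_mul 2).add (hasDerivAt_id y))
  have e : (fun x => 2 * x * Real.log x + x) = fun x => 2 * (x * Real.log x) + id x := by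
    funext x; simp [id]; ring
  rw [e]
  exact h2.congr_deriv (by ring)

lemma hshift {f : ℝ → ℝ} (c : ℝ) {y f' : ℝ} (h : HasDerivAt f f' (y + c)) :
    HasDerivAt (fun x => f (x + c)) f' y := by
  simpa [Function.comp_def] using h.comp y ((hasDerivAt_id y).add_const c)

lemma hshift' {f : ℝ → ℝ} (c : ℝ) {y f' : ℝ} (h : HasDerivAt f f' (y - c)) :
    HasDerivAt (fun x => f (x - c)) f' y := by
  simpa [Function.comp_def] using h.comp y ((hasDerivAt_id y).sub_const c)

noncomputable def G1 (x : ℝ) : ℝ := 2 * x * Real.log x + x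

noncomputable def dd (x : ℝ) : ℝ := gg (x + 2) - 3 * gg (x + 1) + 3 * gg x - gg (x - 1)

noncomputable def dd1 (x : ℝ) : ℝ := G1 (x + 2) - 3 * G1 (x + 1) + 3 * G1 x - G1 (x - 1)

lemma dd_hasDeriv {y : ℝ} (hy : 1 < y) : HasDerivAt dd (dd1 y) y := by
  have h2 := hshift 2 (gg_deriv (by linarith : y + 2 ≠ 0))
  have h1 := hshift 1 (gg_deriv (by linarith : y + 1 ≠ 0))
  have h0 := gg_deriv (by linarith : y ≠ 0)
  have hm := hshift' 1 (gg_deriv (by intro h; rw [sub_eq_zero] at h; linarith : y - 1 ≠ 0))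
  exact (((h2.sub (h1.const_mul 3)).add (h0.const_mul 3)).sub hm)

lemma dd1_hasDeriv {y : ℝ} (hy : 1 < y) :
    HasDerivAt dd1
      (2 * (Real.log (y + 2) + 3 * Real.log y - 3 * Real.log (y + 1) - Real.log (y - 1))) y := by
  have h2 := hshift 2 (gg1_deriv (by linarith : (0:ℝ) < y + 2))
  have h1 := hshift 1 (gg1_deriv (by linarith : (0:ℝ) < y + 1))
  have h0 := gg1_deriv (by linarith : (0:ℝ) < y)
  have hm := hshift' 1 (gg1_deriv (by linarith : (0:ℝ) < y - 1))
  have h := (((h2.sub (h1.const_mul 3)).add (h0.const_mul 3)).sub hm)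
  exact h.congr_deriv (by ring)

noncomputable def uu (x : ℝ) : ℝ := gg (x + 1) - 2 * gg x + gg (x - 1)

noncomputable def uu1 (x : ℝ) : ℝ := G1 (x + 1) - 2 * G1 x + G1 (x - 1)

lemma uu_hasDeriv {y : ℝ} (hy : 1 < y) : HasDerivAt uu (uu1 y) y := by
  have h1 := hshift 1 (gg_deriv (by linarith : y + 1 ≠ 0))
  have h0 := gg_deriv (by linarith : y ≠ 0)
  have hm := hshift' 1 (gg_deriv (by intro h; rw [sub_eq_zero] at h; linarith : y - 1 ≠ 0))
  exact ((h1.sub (h0.const_mul 2)).add hm)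

lemma uu1_hasDeriv {y : ℝ} (hy : 1 < y) :
    HasDerivAt uu1
      (2 * (Real.log (y + 1) + Real.log (y - 1) - 2 * Real.log y)) y := by
  have h1 := hshift 1 (gg1_deriv (by linarith : (0:ℝ) < y + 1))
  have h0 := gg1_deriv (by linarith : (0:ℝ) < y)
  have hm := hshift' 1 (gg1_deriv (by linarith : (0:ℝ) < y - 1))
  have h := ((h1.sub (h0.const_mul 2)).add hm)
  exact h.congr_deriv (by ring)

lemma cont_aux (c : ℝ) : Continuous fun x : ℝ => gg (x + c) :=
  gg_cont.comp (continuous_id.add continuous_const)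

lemma dd_convex : StrictConvexOn ℝ (Set.Ici (1:ℝ)) dd := by
  apply strictConvexOn_of_deriv2_pos (convex_Ici 1)
  · apply Continuous.continuousOn
    exact (((cont_aux 2).sub (continuous_const.mul (cont_aux 1))).add (continuous_const.mul gg_cont)).sub
      (gg_cont.comp (continuous_id.sub continuous_const))
  · intro x hx
    rw [interior_Ici] at hx
    have hx1 : (1:ℝ) < x := hx
    have hev : deriv dd =ᶠ[nhds x] dd1 := by
      filter_upwards [isOpen_Ioi.mem_nhds hx] with y hy
      exact (dd_hasDeriv hy).deriv
    have h2 : deriv^[2] dd x = deriv dd1 x := by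
      simp only [Function.iterate_succ, Function.iterate_zero, Function.comp, id]
      exact hev.deriv_eq
    rw [h2, (dd1_hasDeriv hx1).deriv]
    have hlt : (x + 1) ^ 3 * (x - 1) < (x + 2) * x ^ 3 := by nlinarith
    have hpos : (0:ℝ) < (x + 1) ^ 3 * (x - 1) :=
      mul_pos (by positivity) (by linarith)
    have hlog := Real.log_lt_log hpos hlt
    rw [Real.log_mul (by positivity) (by intro h; rw [sub_eq_zero] at h; linarith),
        Real.log_mul (by positivity) (pow_ne_zero 3 (by linarith)), Real.log_pow,
        Real.log_pow] at hlog
    push_cast at hlog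
    linarith

lemma uu_concave : StrictConcaveOn ℝ (Set.Ici (1:ℝ)) uu := by
  apply strictConcaveOn_of_deriv2_neg (convex_Ici 1)
  · apply Continuous.continuousOn
    exact ((cont_aux 1).sub (continuous_const.mul gg_cont)).add
      (gg_cont.comp (continuous_id.sub continuous_const))
  · intro x hx
    rw [interior_Ici] at hx
    have hx1 : (1:ℝ) < x := hx
    have hev : deriv uu =ᶠ[nhds x] uu1 := by
      filter_upwards [isOpen_Ioi.mem_nhds hx] with y hy
      exact (uu_hasDeriv hy).deriv
    have h2 : deriv^[2] uu x = deriv uu1 x := by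
      simp only [Function.iterate_succ, Function.iterate_zero, Function.comp, id]
      exact hev.deriv_eq
    rw [h2, (uu1_hasDeriv hx1).deriv]
    have hlt : (x + 1) * (x - 1) < x ^ 2 := by nlinarith
    have hpos : (0:ℝ) < (x + 1) * (x - 1) := by nlinarith
    have hlog := Real.log_lt_log hpos hlt
    rw [Real.log_mul (by positivity) (by intro h; rw [sub_eq_zero] at h; linarith),
        Real.log_pow] at hlog
    push_cast at hlog
    linarith

noncomputable def HH (x : ℝ) : ℝ :=
  gg (x - 2) - 4 * gg (x - 1) + 6 * gg x - 4 * gg (x + 1) + gg (x + 2)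

lemma HH_diff (x : ℝ) : HH (x + 1) - HH x = dd (x + 1) - 2 * dd x + dd (x - 1) := by
  have e1 : x + 1 - 2 = x - 1 := by ring
  have e2 : x + 1 - 1 = x := by ring
  have e3 : x + 1 + 1 = x + 2 := by ring
  have e4 : x + 1 + 2 = x + 3 := by ring
  have e5 : x - 1 + 2 = x + 1 := by ring
  have e6 : x - 1 + 1 = x := by ring
  have e7 : x - 1 - 1 = x - 2 := by ring
  simp only [HH, dd, e1, e2, e3, e4, e5, e6, e7]
  ring

lemma HH_eq_uu (x : ℝ) : HH x = uu (x + 1) - 2 * uu x + uu (x - 1) := by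
  have e3 : x + 1 + 1 = x + 2 := by ring
  have e2 : x + 1 - 1 = x := by ring
  have e6 : x - 1 + 1 = x := by ring
  have e7 : x - 1 - 1 = x - 2 := by ring
  simp only [HH, uu, e2, e3, e6, e7]
  ring

lemma HH_mono {x : ℝ} (hx : 2 ≤ x) : HH x < HH (x + 1) := by
  have hm1 : x - 1 ∈ Set.Ici (1:ℝ) := by simp; linarith
  have hp1 : x + 1 ∈ Set.Ici (1:ℝ) := by simp; linarith
  have hne : x - 1 ≠ x + 1 := by intro h; linarith [sub_eq_iff_eq_add.mp h]
  have h := dd_convex.2 hm1 hp1 hne (by norm_num : (0:ℝ) < 1/2)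
    (by norm_num : (0:ℝ) < 1/2) (by norm_num)
  simp only [smul_eq_mul] at h
  have e : 1/2 * (x - 1) + 1/2 * (x + 1) = x := by ring
  rw [e] at h
  have := HH_diff x
  linarith

lemma HH_neg {x : ℝ} (hx : 2 ≤ x) : HH x < 0 := by
  have hm1 : x - 1 ∈ Set.Ici (1:ℝ) := by simp; linarith
  have hp1 : x + 1 ∈ Set.Ici (1:ℝ) := by simp; linarith
  have hne : x - 1 ≠ x + 1 := by intro h; linarith [sub_eq_iff_eq_add.mp h]
  have h := uu_concave.2 hm1 hp1 hne (by norm_num : (0:ℝ) < 1/2)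
    (by norm_num : (0:ℝ) < 1/2) (by norm_num)
  simp only [smul_eq_mul] at h
  have e : 1/2 * (x - 1) + 1/2 * (x + 1) = x := by ring
  rw [e] at h
  have := HH_eq_uu x
  linarith

lemma HH_one : HH 1 = 9 * Real.log 3 - 16 * Real.log 2 := by
  have e1 : (1:ℝ) - 2 = -1 := by norm_num
  have e2 : (1:ℝ) - 1 = 0 := by norm_num
  have e3 : (1:ℝ) + 1 = 2 := by norm_num
  have e4 : (1:ℝ) + 2 = 3 := by norm_num
  simp only [HH, gg, e1, e2, e3, e4]
  rw [show Real.log (-1) = Real.log 1 from Real.log_neg_eq_log 1]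
  simp [Real.log_zero, Real.log_one]
  ring

lemma HH_two : HH 2 = 56 * Real.log 2 - 36 * Real.log 3 := by
  have e1 : (2:ℝ) - 2 = 0 := by norm_num
  have e2 : (2:ℝ) - 1 = 1 := by norm_num
  have e3 : (2:ℝ) + 1 = 3 := by norm_num
  have e4 : (2:ℝ) + 2 = 4 := by norm_num
  simp only [HH, gg, e1, e2, e3, e4]
  rw [show (4:ℝ) = 2^2 by norm_num, Real.log_pow]
  simp [Real.log_zero, Real.log_one]
  ring

lemma log_45_72 : 45 * Real.log 3 < 72 * Real.log 2 := by
  have h := Real.log_lt_log (by positivity) (show (3:ℝ)^45 < 2^72 by norm_num)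
  rw [Real.log_pow, Real.log_pow] at h
  push_cast at h
  linarith

lemma log_9_16 : 9 * Real.log 3 < 16 * Real.log 2 := by
  have h := Real.log_lt_log (by positivity) (show (3:ℝ)^9 < 2^16 by norm_num)
  rw [Real.log_pow, Real.log_pow] at h
  push_cast at h
  linarith

lemma rFn_eq (p : ℕ) : rFn p = (1 / (2 * Real.pi)) * HH p := by
  unfold rFn HH gg
  rw [Real.log_abs, Real.log_abs]
  ring

theorem stmt7 :
    rFn 0 = (4 / Real.pi) * Real.log 2 ∧ 0 < rFn 0 ∧
    ∀ p : ℕ, 1 ≤ p → rFn p < rFn (p + 1) ∧ rFn (p + 1) < 0 := by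
  have hc : (0:ℝ) < 1 / (2 * Real.pi) := by positivity
  have h0 : rFn 0 = (4 / Real.pi) * Real.log 2 := by
    unfold rFn
    push_cast
    rw [show |(0:ℝ) - 2| = 2 by norm_num, show |(0:ℝ) - 1| = 1 by norm_num]
    rw [show (0:ℝ) + 1 = 1 by norm_num, show (0:ℝ) + 2 = 2 by norm_num]
    simp [Real.log_zero, Real.log_one]
    field_simp
    ring
  refine ⟨h0, ?_, ?_⟩
  · rw [h0]
    exact mul_pos (by positivity) (Real.log_pos (by norm_num))
  · intro p hp
    have hHmono : HH p < HH ((p:ℝ) + 1) := by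
      rcases eq_or_lt_of_le hp with h | h
      · rw [← h]
        norm_num
        rw [HH_one, show (2:ℝ) = 1 + 1 by norm_num] at *
        rw [show (1:ℝ) + 1 = 2 by norm_num, HH_two]
        linarith [log_45_72]
      · exact HH_mono (by exact_mod_cast h)
    have hHneg : HH ((p:ℝ) + 1) < 0 := HH_neg (by
      have : (1:ℝ) ≤ (p:ℝ) := by exact_mod_cast hp
      linarith)
    constructor
    · rw [rFn_eq, rFn_eq]
      push_cast
      exact (mul_lt_mul_iff_right₀ hc).mpr hHmono
    · rw [rFn_eq]
      push_cast
      exact mul_neg_of_pos_of_neg hc hHneg
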